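/- For any ω, ω' ∈ (0, π], |D_n(ω) − D_n(ω')| ≤ C n |log(1 + nω') − log(1 + nω)| for some absolute constant C, where D_n(ω) = ∑_{k=1}^n e^{ikω}. -/

import Mathlib

open Real

/-- The Dirichlet kernel `D_n(ω) = ∑_{k=1}^n e^{ikω}`. -/
noncomputable def dirichletKernel (n : ℕ) (ω : ℝ) : ℂ :=
  ∑ k ∈ Finset.Icc 1 n, Complex.exp (Complex.I * k * ω)

namespace DirichletAux

lemma geom_Icc_mul (z : ℂ) (j n : ℕ) (h : j ≤ n) :
    (∑ k ∈ Finset.Icc j n, z ^ k) * (z - 1) = z ^ (n + 1) - z ^ j := by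
  have hset : Finset.Icc j n = Finset.range (n + 1) \ Finset.range j := by
    ext x; simp [Nat.lt_succ_iff]; omega
  rw [hset, Finset.sum_sdiff_eq_sub (by intro x hx; simp at hx ⊢; omega), sub_mul,
    geom_sum_mul, geom_sum_mul]
  ring

lemma geom_Icc_norm (z : ℂ) (hz : ‖z‖ = 1) (j n : ℕ) :
    ‖∑ k ∈ Finset.Icc j n, z ^ k‖ * ‖z - 1‖ ≤ 2 := by
  rcases le_or_gt j n with h | h
  · rw [← norm_mul, geom_Icc_mul z j n h]
    calc ‖z ^ (n + 1) - z ^ j‖ ≤ ‖z ^ (n + 1)‖ + ‖z ^ j‖ := norm_sub_le _ _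
      _ = 2 := by rw [norm_pow, norm_pow, hz]; norm_num
  · rw [Finset.Icc_eq_empty (by omega)]
    simp

lemma abel_bound (z : ℂ) (hz : ‖z‖ = 1) (n : ℕ) :
    ‖∑ k ∈ Finset.Icc 1 n, (k : ℂ) * z ^ k‖ * ‖z - 1‖ ≤ 2 * n := by
  have hswap : ∑ k ∈ Finset.Icc 1 n, (k : ℂ) * z ^ k
      = ∑ j ∈ Finset.Icc 1 n, ∑ k ∈ Finset.Icc j n, z ^ k := by
    have h1 : ∀ k ∈ Finset.Icc 1 n, (k : ℂ) * z ^ k = ∑ j ∈ Finset.Icc 1 k, z ^ k := by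
      intro k hk
      rw [Finset.sum_const, Nat.card_Icc]
      simp [nsmul_eq_mul]
    rw [Finset.sum_congr rfl h1]
    exact Finset.sum_comm' (fun k j => by simp [Finset.mem_Icc]; omega)
  rw [hswap]
  calc ‖∑ j ∈ Finset.Icc 1 n, ∑ k ∈ Finset.Icc j n, z ^ k‖ * ‖z - 1‖
      ≤ (∑ j ∈ Finset.Icc 1 n, ‖∑ k ∈ Finset.Icc j n, z ^ k‖) * ‖z - 1‖ := by
        gcongr; exact norm_sum_le _ _
    _ = ∑ j ∈ Finset.Icc 1 n, ‖∑ k ∈ Finset.Icc j n, z ^ k‖ * ‖z - 1‖ :=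
        Finset.sum_mul _ _ _
    _ ≤ ∑ _j ∈ Finset.Icc 1 n, (2:ℝ) :=
        Finset.sum_le_sum fun j _ => geom_Icc_norm z hz j n
    _ = 2 * n := by
        rw [Finset.sum_const, Nat.card_Icc, Nat.add_sub_cancel, nsmul_eq_mul, mul_comm]

lemma norm_exp_sub_one_ge (t : ℝ) (ht : 0 < t) (ht' : t ≤ π) :
    2 * t / π ≤ ‖Complex.exp (Complex.I * t) - 1‖ := by
  have h1 : Complex.exp (Complex.I * t) - 1
      = ((Real.cos t - 1 : ℝ) : ℂ) + ((Real.sin t : ℝ) : ℂ) * Complex.I := by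
    rw [mul_comm, Complex.exp_mul_I]
    push_cast
    ring
  rw [h1, Complex.norm_add_mul_I]
  have hcos : Real.cos t ≤ 1 - 2 / π ^ 2 * t ^ 2 :=
    Real.cos_le_one_sub_mul_cos_sq (by rw [abs_of_pos ht]; exact ht')
  have hpi := Real.pi_pos
  have key : 2 / π ^ 2 * t ^ 2 * π ^ 2 = 2 * t ^ 2 := by field_simp
  have hcos2 : Real.cos t * π ^ 2 ≤ (1 - 2 / π ^ 2 * t ^ 2) * π ^ 2 :=
    mul_le_mul_of_nonneg_right hcos (sq_nonneg π)
  rw [sub_mul, key] at hcos2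
  rw [show (Real.cos t - 1) ^ 2 + Real.sin t ^ 2 = 2 - 2 * Real.cos t by
    nlinarith [Real.sin_sq_add_cos_sq t]]
  rw [Real.le_sqrt (by positivity), div_pow, div_le_iff₀ (by positivity)]
  · nlinarith
  · nlinarith [Real.cos_le_one t]

lemma deriv_bound (n : ℕ) (t : ℝ) (ht : 0 < t) (ht' : t ≤ π) :
    ‖∑ k ∈ Finset.Icc 1 n, Complex.exp (Complex.I * k * t) * (Complex.I * k)‖
      ≤ 2 * π * n * (n / (1 + n * t)) := by
  set z : ℂ := Complex.exp (Complex.I * t) with hzdef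
  have hz : ‖z‖ = 1 := by
    rw [hzdef, Complex.norm_exp]
    simp
  have hterm : ∀ k : ℕ, Complex.exp (Complex.I * k * t) * (Complex.I * k)
      = Complex.I * ((k : ℂ) * z ^ k) := by
    intro k
    rw [hzdef, ← Complex.exp_nat_mul, show (k : ℂ) * (Complex.I * t) = Complex.I * k * t by ring]
    ring
  rw [Finset.sum_congr rfl (fun k _ => hterm k), ← Finset.mul_sum, norm_mul, Complex.norm_I,
    one_mul]
  set S : ℝ := ‖∑ k ∈ Finset.Icc 1 n, (k : ℂ) * z ^ k‖ with hSdef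
  have hS0 : 0 ≤ S := norm_nonneg _
  have hpi := Real.pi_pos
  have hn0 : (0:ℝ) ≤ n := Nat.cast_nonneg n
  have h1nt : (0:ℝ) < 1 + n * t := by positivity
  rcases le_or_gt ((n : ℝ) * t) 1 with hnt | hnt
  · -- small nt : use the trivial bound S ≤ n * n
    have hb1 : S ≤ (n : ℝ) * n := by
      calc S ≤ ∑ k ∈ Finset.Icc 1 n, ‖(k : ℂ) * z ^ k‖ := norm_sum_le _ _
        _ ≤ ∑ _k ∈ Finset.Icc 1 n, (n : ℝ) := by
            apply Finset.sum_le_sum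
            intro k hk
            rw [norm_mul, norm_pow, hz, one_pow, mul_one, Complex.norm_natCast]
            exact_mod_cast (Finset.mem_Icc.mp hk).2
        _ = (n : ℝ) * n := by
            rw [Finset.sum_const, Nat.card_Icc, Nat.add_sub_cancel, nsmul_eq_mul]
    refine hb1.trans ?_
    rw [mul_div_assoc' , le_div_iff₀ h1nt]
    nlinarith [Real.pi_gt_three]
  · -- large nt : use the Abel bound
    have hzn := norm_exp_sub_one_ge t ht ht'
    have habel := abel_bound z hz n
    have ht2 : 0 < 2 * t / π := by positivity
    have hb2 : S * (2 * t / π) ≤ 2 * n := le_trans (by gcongr) habel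
    have hb3 : S ≤ π * n / t := by
      rw [le_div_iff₀ ht]
      have h4 := mul_le_mul_of_nonneg_right hb2 hpi.le
      have h5 : S * (2 * t / π) * π = 2 * (S * t) := by field_simp
      rw [h5] at h4
      linarith
    refine hb3.trans ?_
    rw [mul_div_assoc', div_le_div_iff₀ ht h1nt]
    nlinarith [mul_nonneg (mul_nonneg hpi.le hn0) (by linarith : (0:ℝ) ≤ (n:ℝ) * t - 1)]

lemma term_hasDerivAt (k : ℕ) (t : ℝ) :
    HasDerivAt (fun s : ℝ => Complex.exp (Complex.I * k * s))
      (Complex.exp (Complex.I * k * t) * (Complex.I * k)) t := by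
  have h1 : HasDerivAt (fun s : ℝ => ((s : ℂ))) 1 t := by
    simpa using (hasDerivAt_id t).ofReal_comp
  simpa using (h1.const_mul (Complex.I * k)).cexp

lemma key (n : ℕ) (ω ω' : ℝ) (hω : 0 < ω) (hle : ω ≤ ω') (hπ : ω' ≤ π) :
    ‖dirichletKernel n ω' - dirichletKernel n ω‖
      ≤ 2 * π * n * (Real.log (1 + n * ω') - Real.log (1 + n * ω)) := by
  set f : ℝ → ℂ := fun s => dirichletKernel n s - dirichletKernel n ω with hfdef
  set f' : ℝ → ℂ := fun s =>
    ∑ k ∈ Finset.Icc 1 n, Complex.exp (Complex.I * k * s) * (Complex.I * k) with hf'def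
  have hder : ∀ s : ℝ, HasDerivAt f (f' s) s := by
    intro s
    have h1 : HasDerivAt (fun u : ℝ => dirichletKernel n u) (f' s) s := by
      unfold dirichletKernel
      exact HasDerivAt.fun_sum fun k _ => term_hasDerivAt k s
    simpa [hfdef] using h1.sub_const (dirichletKernel n ω)
  set B : ℝ → ℝ := fun s => 2 * π * n * (Real.log (1 + n * s) - Real.log (1 + n * ω))
    with hBdef
  set B' : ℝ → ℝ := fun s => 2 * π * n * (n / (1 + n * s)) with hB'def
  have hB : ∀ s ∈ Set.Icc ω ω', HasDerivAt B (B' s) s := by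
    intro s hs
    have hspos : 0 < s := lt_of_lt_of_le hω hs.1
    have h1 : HasDerivAt (fun u : ℝ => 1 + (n : ℝ) * u) (n : ℝ) s := by
      simpa using ((hasDerivAt_id s).const_mul (n : ℝ)).const_add 1
    have h2 := (h1.log (by positivity)).sub_const (Real.log (1 + n * ω))
    simpa [hBdef, hB'def] using h2.const_mul (2 * π * (n : ℝ))
  have main := image_norm_le_of_norm_deriv_right_le_deriv_boundary'
    (f := f) (f' := f') (a := ω) (b := ω') (B := B) (B' := B')
    (fun s _ => (hder s).continuousAt.continuousWithinAt)
    (fun s hs => (hder s).hasDerivWithinAt)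
    (by simp [hfdef, hBdef])
    (fun s hs => (hB s hs).continuousAt.continuousWithinAt)
    (fun s hs => (hB s ⟨hs.1, hs.2.le⟩).hasDerivWithinAt)
    (fun s hs => deriv_bound n s (lt_of_lt_of_le hω hs.1) (le_trans hs.2.le hπ))
  have := main (Set.right_mem_Icc.mpr hle)
  simpa [hfdef, hBdef] using this

end DirichletAux

/-- For any `ω, ω' ∈ (0, π]`, `|D_n(ω) − D_n(ω')| ≤ C n |log(1 + nω') − log(1 + nω)|`
for some absolute constant `C`. -/
theorem dirichletKernel_modulus_of_continuity :
    ∃ C : ℝ, 0 < C ∧ ∀ n : ℕ, ∀ ω ω' : ℝ,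
      0 < ω → ω ≤ π → 0 < ω' → ω' ≤ π →
      ‖dirichletKernel n ω - dirichletKernel n ω'‖
        ≤ C * n * |Real.log (1 + n * ω') - Real.log (1 + n * ω)| := by
  refine ⟨2 * π, by positivity, ?_⟩
  intro n ω ω' hω hωπ hω' hω'π
  have hn0 : (0:ℝ) ≤ n := Nat.cast_nonneg n
  rcases le_total ω ω' with h | h
  · have hk := DirichletAux.key n ω ω' hω h hω'π
    have hlog : Real.log (1 + n * ω) ≤ Real.log (1 + n * ω') := by
      gcongr
    rw [norm_sub_rev] at hk
    rwa [abs_of_nonneg (by linarith)]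
  · have hk := DirichletAux.key n ω' ω hω' h hωπ
    have hlog : Real.log (1 + n * ω') ≤ Real.log (1 + n * ω) := by
      gcongr
    rw [abs_of_nonpos (by linarith), neg_sub]
    exact hk
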